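/- Let C be an elasticity tensor with harmonic components (λ, μ, a, b, D), i.e., C i j k l = λ δᵢⱼ δₖₗ + μ (δᵢₖ δⱼₗ + δᵢₗ δⱼₖ) + δᵢⱼ a k l + δₖₗ a i j + δᵢₖ b j l + δⱼₗ b i k + δᵢₗ b j k + δⱼₖ b i l + D i j k l with a, b symmetric traceless 3×3 matrices and D ∈ H⁴. Then the stabilizer of C in SO(3) equals the intersection Stab(a) ∩ Stab(b) ∩ Stab(d₂(D)) ∩ Stab(D), where Stab(a) = {g ∈ SO(3) | g a gᵀ = a} (and likewise for b and d₂(D)) and Stab(D) = {g ∈ SO(3) | g·D = D}. -/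
import Mathlib


open Matrix BigOperators

abbrev Mat3 := Matrix (Fin 3) (Fin 3) ℝ
abbrev T4 := Fin 3 → Fin 3 → Fin 3 → Fin 3 → ℝ

/-- `g ∈ SO(3)`: real orthogonal 3×3 matrix of determinant 1. -/
def IsSO3 (g : Mat3) : Prop := g * gᵀ = 1 ∧ g.det = 1

/-- A harmonic fourth-order tensor: totally symmetric and traceless. -/
def IsHarm (D : T4) : Prop :=
  (∀ i j k l, D i j k l = D j i k l) ∧
  (∀ i j k l, D i j k l = D i k j l) ∧
  (∀ i j k l, D i j k l = D i j l k) ∧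
  (∀ i j, ∑ k, D k k i j = 0)

/-- The action of a rotation `g` on a fourth-order tensor. -/
noncomputable def act (g : Mat3) (D : T4) : T4 := fun i j k l =>
  ∑ p, ∑ q, ∑ r, ∑ s, g i p * g j q * g k r * g l s * D p q r s

/-- `D²`, the square of a fourth-order tensor. -/
noncomputable def sqT (D : T4) : T4 := fun i j k l => ∑ p, ∑ q, D i j p q * D p q k l

/-- `D³`, the cube of a fourth-order tensor. -/
noncomputable def cbT (D : T4) : T4 := fun i j k l => ∑ p, ∑ q, sqT D i j p q * D p q k l

/-- The second-order Boehler covariant `d₂(D) j l = ∑ᵢ (D²) i j i l`. -/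
noncomputable def d2 (D : T4) : Mat3 := Matrix.of fun j l => ∑ i, sqT D i j i l

/-- The second-order covariant `d₃(D) j l = ∑ᵢ (D³) i j i l`. -/
noncomputable def d3 (D : T4) : Mat3 := Matrix.of fun j l => ∑ i, cbT D i j i l

/-- Fundamental invariant `J₂ = tr d₂`. -/
noncomputable def J2 (D : T4) : ℝ := (d2 D).trace
/-- Fundamental invariant `J₃ = tr d₃`. -/
noncomputable def J3 (D : T4) : ℝ := (d3 D).trace
/-- Fundamental invariant `J₄ = tr(d₂²)`. -/
noncomputable def J4 (D : T4) : ℝ := (d2 D * d2 D).trace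
/-- Fundamental invariant `J₅ = ∑ (d₂)ᵢⱼ D i j k l (d₂)ₖₗ`. -/
noncomputable def J5 (D : T4) : ℝ :=
  ∑ i, ∑ j, ∑ k, ∑ l, d2 D i j * D i j k l * d2 D k l
/-- Fundamental invariant `J₆ = tr(d₂³)`. -/
noncomputable def J6 (D : T4) : ℝ := (d2 D * d2 D * d2 D).trace
/-- Fundamental invariant `J₇ = ∑ (d₂²)ᵢⱼ D i j k l (d₂)ₖₗ`. -/
noncomputable def J7 (D : T4) : ℝ :=
  ∑ i, ∑ j, ∑ k, ∑ l, (d2 D * d2 D) i j * D i j k l * d2 D k l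
/-- Fundamental invariant `J₈ = ∑ (d₂²)ᵢⱼ (D²) i j k l (d₂)ₖₗ`. -/
noncomputable def J8 (D : T4) : ℝ :=
  ∑ i, ∑ j, ∑ k, ∑ l, (d2 D * d2 D) i j * sqT D i j k l * d2 D k l
/-- Fundamental invariant `J₉ = ∑ (d₂²)ᵢⱼ D i j k l (d₂²)ₖₗ`. -/
noncomputable def J9 (D : T4) : ℝ :=
  ∑ i, ∑ j, ∑ k, ∑ l, (d2 D * d2 D) i j * D i j k l * (d2 D * d2 D) k l
/-- Fundamental invariant `J₁₀ = ∑ (d₂²)ᵢⱼ (D²) i j k l (d₂²)ₖₗ`. -/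
noncomputable def J10 (D : T4) : ℝ :=
  ∑ i, ∑ j, ∑ k, ∑ l, (d2 D * d2 D) i j * sqT D i j k l * (d2 D * d2 D) k l

/-- The totally symmetric tensor whose value at `(i,j,k,l)` depends only on the
multiset of indices `{i,j,k,l}`. -/
noncomputable def symT (f : Multiset (Fin 3) → ℝ) : T4 := fun i j k l => f {i, j, k, l}

/-- Kronecker delta on `Fin 3`. -/
def kd (i j : Fin 3) : ℝ := if i = j then 1 else 0

/-- An elasticity tensor: minor and major index symmetries. -/
def IsEla (C : T4) : Prop :=
  ∀ i j k l, C i j k l = C j i k l ∧ C i j k l = C i j l k ∧ C i j k l = C k l i j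

/-- The harmonic decomposition equation `C = (λ, μ, a, b, D)`. -/
def HarmDecomp (C : T4) (lam mu : ℝ) (a b : Mat3) (D : T4) : Prop :=
  ∀ i j k l, C i j k l =
    lam * kd i j * kd k l + mu * (kd i k * kd j l + kd i l * kd j k) +
    kd i j * a k l + kd k l * a i j +
    kd i k * b j l + kd j l * b i k + kd i l * b j k + kd j k * b i l +
    D i j k l

lemma contract' {ι : Type*} [Fintype ι] [DecidableEq ι] (G : ι → ι → ℝ)
    (h : ∀ c e, ∑ p, G p c * G p e = if c = e then 1 else 0) (F : ι → ι → ℝ) :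
    ∑ p, ∑ c, ∑ e, G p c * G p e * F c e = ∑ c, F c c := by
  rw [Finset.sum_comm]
  have step : ∀ c, ∑ p, ∑ e, G p c * G p e * F c e = ∑ e, (∑ p, G p c * G p e) * F c e := by
    intro c
    rw [Finset.sum_comm]
    exact Finset.sum_congr rfl fun e _ => by rw [Finset.sum_mul]
  simp only [step, h, ite_mul, one_mul, zero_mul, Finset.sum_ite_eq, Finset.mem_univ, if_true]

lemma c12' (g : Mat3) (hcol : ∀ c e : Fin 3, ∑ k, g k c * g k e = if c = e then 1 else 0)
    (T : T4) (i j : Fin 3) :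
    ∑ k, act g T k k i j = ∑ p, ∑ q, g i p * g j q * (∑ k, T k k p q) := by
  have step1 : ∀ k, act g T k k i j =
      ∑ p, ∑ q, g k p * g k q * (∑ r, ∑ s, g i r * g j s * T p q r s) := by
    intro k; simp only [act, Fin.sum_univ_three]; ring
  calc ∑ k, act g T k k i j
      = ∑ k, ∑ p, ∑ q, g k p * g k q * (∑ r, ∑ s, g i r * g j s * T p q r s) :=
        Finset.sum_congr rfl fun k _ => step1 k
    _ = ∑ p, (∑ r, ∑ s, g i r * g j s * T p p r s) :=
        contract' g hcol (fun p q => ∑ r, ∑ s, g i r * g j s * T p q r s)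
    _ = ∑ p, ∑ q, g i p * g j q * (∑ k, T k k p q) := by
        simp only [Fin.sum_univ_three]; ring

lemma c13' (g : Mat3) (hcol : ∀ c e : Fin 3, ∑ k, g k c * g k e = if c = e then 1 else 0)
    (T : T4) (j l : Fin 3) :
    ∑ i, act g T i j i l = ∑ q, ∑ s, g j q * g l s * (∑ p, T p q p s) := by
  have step1 : ∀ i, act g T i j i l =
      ∑ p, ∑ r, g i p * g i r * (∑ q, ∑ s, g j q * g l s * T p q r s) := by
    intro i; simp only [act, Fin.sum_univ_three]; ring
  calc ∑ i, act g T i j i l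
      = ∑ i, ∑ p, ∑ r, g i p * g i r * (∑ q, ∑ s, g j q * g l s * T p q r s) :=
        Finset.sum_congr rfl fun i _ => step1 i
    _ = ∑ p, (∑ q, ∑ s, g j q * g l s * T p q p s) :=
        contract' g hcol (fun p r => ∑ q, ∑ s, g j q * g l s * T p q r s)
    _ = ∑ q, ∑ s, g j q * g l s * (∑ p, T p q p s) := by
        simp only [Fin.sum_univ_three]; ring

lemma sq_act (g : Mat3) (hcol : ∀ c e : Fin 3, ∑ k, g k c * g k e = if c = e then 1 else 0)
    (D : T4) : sqT (act g D) = act g (sqT D) := by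
  funext i j k l
  set G : (Fin 3 × Fin 3) → (Fin 3 × Fin 3) → ℝ := fun p c => g p.1 c.1 * g p.2 c.2 with hGdef
  have hG : ∀ c e, ∑ p : Fin 3 × Fin 3, G p c * G p e = if c = e then 1 else 0 := by
    intro c e
    rw [Fintype.sum_prod_type]
    calc ∑ p1, ∑ p2, G (p1, p2) c * G (p1, p2) e
        = ∑ p1, ∑ p2, (g p1 c.1 * g p1 e.1) * (g p2 c.2 * g p2 e.2) :=
          Finset.sum_congr rfl fun _ _ => Finset.sum_congr rfl fun _ _ => by
            simp only [hGdef]; ring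
      _ = (∑ p1, g p1 c.1 * g p1 e.1) * (∑ p2, g p2 c.2 * g p2 e.2) := by
          rw [Finset.sum_mul_sum]
      _ = (if c.1 = e.1 then (1:ℝ) else 0) * (if c.2 = e.2 then (1:ℝ) else 0) := by
          rw [hcol c.1 e.1, hcol c.2 e.2]
      _ = if c = e then 1 else 0 := by
          by_cases h1 : c.1 = e.1 <;> by_cases h2 : c.2 = e.2 <;>
            simp [Prod.ext_iff, h1, h2]
  have hU : ∀ p q : Fin 3, act g D i j p q =
      ∑ c : Fin 3 × Fin 3, G (p, q) c * (∑ u, ∑ v, g i u * g j v * D u v c.1 c.2) := by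
    intro p q
    rw [Fintype.sum_prod_type]
    simp only [act, hGdef, Fin.sum_univ_three]; ring
  have hV : ∀ p q : Fin 3, act g D p q k l =
      ∑ e : Fin 3 × Fin 3, G (p, q) e * (∑ u, ∑ v, g k u * g l v * D e.1 e.2 u v) := by
    intro p q
    rw [Fintype.sum_prod_type]
    simp only [act, hGdef, Fin.sum_univ_three]; ring
  calc sqT (act g D) i j k l
      = ∑ p, ∑ q, act g D i j p q * act g D p q k l := rfl
    _ = ∑ P : Fin 3 × Fin 3, act g D i j P.1 P.2 * act g D P.1 P.2 k l := by
        rw [Fintype.sum_prod_type]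
    _ = ∑ P : Fin 3 × Fin 3, ∑ c, ∑ e, G P c * G P e *
          ((∑ u, ∑ v, g i u * g j v * D u v c.1 c.2) *
           (∑ u, ∑ v, g k u * g l v * D e.1 e.2 u v)) := by
        refine Finset.sum_congr rfl fun P _ => ?_
        rw [hU P.1 P.2, hV P.1 P.2, Finset.sum_mul_sum]
        exact Finset.sum_congr rfl fun c _ => Finset.sum_congr rfl fun e _ => by ring
    _ = ∑ c : Fin 3 × Fin 3, (∑ u, ∑ v, g i u * g j v * D u v c.1 c.2) *
          (∑ u, ∑ v, g k u * g l v * D c.1 c.2 u v) :=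
        contract' G hG _
    _ = ∑ c1, ∑ c2, (∑ u, ∑ v, g i u * g j v * D u v c1 c2) *
          (∑ u, ∑ v, g k u * g l v * D c1 c2 u v) := by
        rw [Fintype.sum_prod_type]
    _ = act g (sqT D) i j k l := by
        simp only [act, sqT, Fin.sum_univ_three]; ring


lemma sum_kdl (x : Fin 3) (f : Fin 3 → ℝ) :
    kd 0 x * f 0 + kd 1 x * f 1 + kd 2 x * f 2 = f x := by
  fin_cases x <;> norm_num [kd, Fin.ext_iff] <;> exact congrArg f (by decide)

lemma sum_kdr (x : Fin 3) (f : Fin 3 → ℝ) :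
    kd x 0 * f 0 + kd x 1 * f 1 + kd x 2 * f 2 = f x := by
  fin_cases x <;> norm_num [kd, Fin.ext_iff] <;> exact congrArg f (by decide)

lemma kd_eval_one : kd 0 0 = 1 ∧ kd 1 1 = 1 ∧ kd 2 2 = 1 := by norm_num [kd, Fin.ext_iff]

lemma kd_eval_zero : kd 0 1 = 0 ∧ kd 0 2 = 0 ∧ kd 1 0 = 0 ∧ kd 1 2 = 0 ∧ kd 2 0 = 0 ∧ kd 2 1 = 0 := by
  norm_num [kd, Fin.ext_iff]

set_option maxRecDepth 10000 in
set_option maxHeartbeats 2000000 in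
lemma act_decomp (g : Mat3)
    (hrow3 : ∀ x y : Fin 3, g x 0 * g y 0 + g x 1 * g y 1 + g x 2 * g y 2 = kd x y)
    (C : T4) (lam mu : ℝ) (a b : Mat3) (D : T4) (hdec : HarmDecomp C lam mu a b D)
    (i j k l : Fin 3) :
    act g C i j k l =
      lam * kd i j * kd k l + mu * (kd i k * kd j l + kd i l * kd j k) +
      kd i j * (g * a * gᵀ) k l + kd k l * (g * a * gᵀ) i j +
      kd i k * (g * b * gᵀ) j l + kd j l * (g * b * gᵀ) i k +
      kd i l * (g * b * gᵀ) j k + kd j k * (g * b * gᵀ) i l +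
      act g D i j k l := by
  have hdec' : ∀ i j k l, C i j k l =
      lam * kd i j * kd k l + mu * (kd i k * kd j l + kd i l * kd j k) +
      kd i j * a k l + kd k l * a i j +
      kd i k * b j l + kd j l * b i k + kd i l * b j k + kd j k * b i l +
      D i j k l := hdec
  simp only [act, hdec', Matrix.mul_apply, Matrix.transpose_apply]
  simp (config := { maxSteps := 10000000 }) only [Fin.sum_univ_three]
  simp (config := { maxSteps := 10000000 }) only [kd_eval_one, kd_eval_zero]
  linear_combination
    (lam * (g k 0 * g l 0 + g k 1 * g l 1 + g k 2 * g l 2) + (g k 0 * g l 0 * a 0 0 + g k 0 * g l 1 * a 0 1 + g k 0 * g l 2 * a 0 2 + g k 1 * g l 0 * a 1 0 + g k 1 * g l 1 * a 1 1 + g k 1 * g l 2 * a 1 2 + g k 2 * g l 0 * a 2 0 + g k 2 * g l 1 * a 2 1 + g k 2 * g l 2 * a 2 2)) * hrow3 i j +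
    (lam * kd i j + (g i 0 * g j 0 * a 0 0 + g i 0 * g j 1 * a 0 1 + g i 0 * g j 2 * a 0 2 + g i 1 * g j 0 * a 1 0 + g i 1 * g j 1 * a 1 1 + g i 1 * g j 2 * a 1 2 + g i 2 * g j 0 * a 2 0 + g i 2 * g j 1 * a 2 1 + g i 2 * g j 2 * a 2 2)) * hrow3 k l +
    (mu * (g j 0 * g l 0 + g j 1 * g l 1 + g j 2 * g l 2) + (g j 0 * g l 0 * b 0 0 + g j 0 * g l 1 * b 0 1 + g j 0 * g l 2 * b 0 2 + g j 1 * g l 0 * b 1 0 + g j 1 * g l 1 * b 1 1 + g j 1 * g l 2 * b 1 2 + g j 2 * g l 0 * b 2 0 + g j 2 * g l 1 * b 2 1 + g j 2 * g l 2 * b 2 2)) * hrow3 i k +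
    (mu * kd i k + (g i 0 * g k 0 * b 0 0 + g i 0 * g k 1 * b 0 1 + g i 0 * g k 2 * b 0 2 + g i 1 * g k 0 * b 1 0 + g i 1 * g k 1 * b 1 1 + g i 1 * g k 2 * b 1 2 + g i 2 * g k 0 * b 2 0 + g i 2 * g k 1 * b 2 1 + g i 2 * g k 2 * b 2 2)) * hrow3 j l +
    (mu * (g j 0 * g k 0 + g j 1 * g k 1 + g j 2 * g k 2) + (g j 0 * g k 0 * b 0 0 + g j 0 * g k 1 * b 0 1 + g j 0 * g k 2 * b 0 2 + g j 1 * g k 0 * b 1 0 + g j 1 * g k 1 * b 1 1 + g j 1 * g k 2 * b 1 2 + g j 2 * g k 0 * b 2 0 + g j 2 * g k 1 * b 2 1 + g j 2 * g k 2 * b 2 2)) * hrow3 i l +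
    (mu * kd i l + (g i 0 * g l 0 * b 0 0 + g i 0 * g l 1 * b 0 1 + g i 0 * g l 2 * b 0 2 + g i 1 * g l 0 * b 1 0 + g i 1 * g l 1 * b 1 1 + g i 1 * g l 2 * b 1 2 + g i 2 * g l 0 * b 2 0 + g i 2 * g l 1 * b 2 1 + g i 2 * g l 2 * b 2 2)) * hrow3 j k
set_option maxHeartbeats 2000000 in
/-- the stabilizer in `SO(3)` of an elasticity tensor `C` with harmonic
components `(λ, μ, a, b, D)` is the intersection of the stabilizers of `a`, `b`, `d₂(D)`
and `D`. -/
theorem stabilizer_elasticity_eq_intersection (C : T4) (hC : IsEla C)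
    (lam mu : ℝ) (a b : Mat3) (D : T4)
    (ha : aᵀ = a) (ha0 : a.trace = 0) (hb : bᵀ = b) (hb0 : b.trace = 0)
    (hD : IsHarm D) (hdec : HarmDecomp C lam mu a b D) :
    ∀ g : Mat3, IsSO3 g →
      (act g C = C ↔
        (g * a * gᵀ = a ∧ g * b * gᵀ = b ∧ g * d2 D * gᵀ = d2 D ∧ act g D = D)) := by
  have hdec' : ∀ i j k l, C i j k l =
      lam * kd i j * kd k l + mu * (kd i k * kd j l + kd i l * kd j k) +
      kd i j * a k l + kd k l * a i j +
      kd i k * b j l + kd j l * b i k + kd i l * b j k + kd j k * b i l +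
      D i j k l := hdec
  have hDtr : ∀ i j, D 0 0 i j + D 1 1 i j + D 2 2 i j = 0 := fun i j => by
    simpa [Fin.sum_univ_three] using hD.2.2.2 i j
  have hD13 : ∀ k p q, D k p k q = D k k p q := fun k p q => (hD.2.1 k k p q).symm
  have htrA : a 0 0 + a 1 1 + a 2 2 = 0 := by
    simpa [Matrix.trace, Matrix.diag, Fin.sum_univ_three] using ha0
  have htrB : b 0 0 + b 1 1 + b 2 2 = 0 := by
    simpa [Matrix.trace, Matrix.diag, Fin.sum_univ_three] using hb0
  have haS : ∀ x y : Fin 3, a y x = a x y := fun x y => congrFun (congrFun ha x) y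
  have hbS : ∀ x y : Fin 3, b y x = b x y := fun x y => congrFun (congrFun hb x) y
  have hM1 : ∀ p q, (∑ k, C k k p q) = (3*lam+2*mu) * kd p q + 3*a p q + 4*b p q := by
    intro p q
    simp only [hdec', Fin.sum_univ_three, kd_eval_one.1, kd_eval_one.2.1, kd_eval_one.2.2]
    linear_combination 2*mu*(sum_kdl p (fun k => kd k q)) + 2*(sum_kdl p (fun k => b k q)) +
      2*(sum_kdl q (fun k => b k p)) + 2*(hbS p q) + kd p q * htrA + hDtr p q
  have hM2 : ∀ p q, (∑ k, C k p k q) = (lam+4*mu) * kd p q + 2*a p q + 5*b p q := by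
    intro p q
    simp only [hdec', Fin.sum_univ_three, kd_eval_one.1, kd_eval_one.2.1, kd_eval_one.2.2]
    linear_combination lam*(sum_kdl p (fun k => kd k q)) + mu*(sum_kdl q (fun k => kd p k)) +
      (sum_kdl p (fun k => a k q)) + (sum_kdl q (fun k => a k p)) + haS p q +
      kd p q * htrB + (sum_kdl q (fun k => b p k)) + (sum_kdr p (fun k => b k q)) +
      hD13 0 p q + hD13 1 p q + hD13 2 p q + hDtr p q
  intro g hg
  obtain ⟨hg1, -⟩ := hg
  have hg2 : gᵀ * g = 1 := mul_eq_one_comm.mp hg1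
  have hcol : ∀ c e : Fin 3, ∑ k, g k c * g k e = if c = e then 1 else 0 := by
    intro c e
    have h := congrFun (congrFun hg2 c) e
    simpa [Matrix.mul_apply, Matrix.transpose_apply, Matrix.one_apply] using h
  have hrow3 : ∀ x y : Fin 3, g x 0 * g y 0 + g x 1 * g y 1 + g x 2 * g y 2 = kd x y := by
    intro x y
    have h := congrFun (congrFun hg1 x) y
    simpa [Matrix.mul_apply, Matrix.transpose_apply, Matrix.one_apply,
      Fin.sum_univ_three, kd] using h
  have adec := act_decomp g hrow3 C lam mu a b D hdec
  constructor
  · intro hC'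
    have hpt : ∀ i j k l, act g C i j k l = C i j k l := fun i j k l =>
      congrFun (congrFun (congrFun (congrFun hC' i) j) k) l
    have F1 : ∀ i j, ∑ k, act g C k k i j = ∑ k, C k k i j := fun i j =>
      Finset.sum_congr rfl fun k _ => hpt k k i j
    have F2 : ∀ i j, ∑ k, act g C k i k j = ∑ k, C k i k j := fun i j =>
      Finset.sum_congr rfl fun k _ => hpt k i k j
    have E1 : ∀ i j, 3*(g*a*gᵀ) i j + 4*(g*b*gᵀ) i j = 3*a i j + 4*b i j := by
      intro i j
      have h0 : ∑ p, ∑ q, g i p * g j q * (∑ k, C k k p q) = ∑ k, C k k i j :=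
        (c12' g hcol C i j).symm.trans (F1 i j)
      simp only [hM1] at h0
      simp only [Matrix.mul_apply, Matrix.transpose_apply, Fin.sum_univ_three,
        kd_eval_one.1, kd_eval_one.2.1, kd_eval_one.2.2,
        kd_eval_zero.1, kd_eval_zero.2.1, kd_eval_zero.2.2.1, kd_eval_zero.2.2.2.1,
        kd_eval_zero.2.2.2.2.1, kd_eval_zero.2.2.2.2.2] at h0 ⊢
      linear_combination h0 - (3*lam+2*mu) * hrow3 i j
    have E2 : ∀ i j, 2*(g*a*gᵀ) i j + 5*(g*b*gᵀ) i j = 2*a i j + 5*b i j := by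
      intro i j
      have h0 : ∑ p, ∑ q, g i p * g j q * (∑ k, C k p k q) = ∑ k, C k i k j :=
        (c13' g hcol C i j).symm.trans (F2 i j)
      simp only [hM2] at h0
      simp only [Matrix.mul_apply, Matrix.transpose_apply, Fin.sum_univ_three,
        kd_eval_one.1, kd_eval_one.2.1, kd_eval_one.2.2,
        kd_eval_zero.1, kd_eval_zero.2.1, kd_eval_zero.2.2.1, kd_eval_zero.2.2.2.1,
        kd_eval_zero.2.2.2.2.1, kd_eval_zero.2.2.2.2.2] at h0 ⊢
      linear_combination h0 - (lam+4*mu) * hrow3 i j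
    have hA : g * a * gᵀ = a := by
      ext x y
      have e1 := E1 x y
      have e2 := E2 x y
      linarith
    have hB : g * b * gᵀ = b := by
      ext x y
      have e1 := E1 x y
      have e2 := E2 x y
      linarith
    have hAe : ∀ x y, (g * a * gᵀ) x y = a x y := fun x y => by rw [hA]
    have hBe : ∀ x y, (g * b * gᵀ) x y = b x y := fun x y => by rw [hB]
    have hgD : act g D = D := by
      funext i j k l
      linear_combination (hdec' i j k l) + (hpt i j k l) - (adec i j k l) -
        kd i j * hAe k l - kd k l * hAe i j - kd i k * hBe j l - kd j l * hBe i k -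
        kd i l * hBe j k - kd j k * hBe i l
    have hsq := sq_act g hcol D
    rw [hgD] at hsq
    have hd2 : g * d2 D * gᵀ = d2 D := by
      ext x y
      calc (g * d2 D * gᵀ) x y
          = ∑ q, ∑ s, g x q * g y s * d2 D q s := by
            simp only [Matrix.mul_apply, Matrix.transpose_apply, Fin.sum_univ_three]
            ring
        _ = ∑ q, ∑ s, g x q * g y s * (∑ p, sqT D p q p s) := rfl
        _ = ∑ i, act g (sqT D) i x i y := (c13' g hcol (sqT D) x y).symm
        _ = ∑ i, sqT D i x i y :=
            Finset.sum_congr rfl fun i _ => by rw [← hsq]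
        _ = d2 D x y := rfl
    exact ⟨hA, hB, hd2, hgD⟩
  · rintro ⟨hA, hB, -, hgD⟩
    have hAe : ∀ x y, (g * a * gᵀ) x y = a x y := fun x y => by rw [hA]
    have hBe : ∀ x y, (g * b * gᵀ) x y = b x y := fun x y => by rw [hB]
    have hgDe : ∀ i j k l, act g D i j k l = D i j k l := fun i j k l =>
      congrFun (congrFun (congrFun (congrFun hgD i) j) k) l
    funext i j k l
    linear_combination (adec i j k l) + kd i j * hAe k l + kd k l * hAe i j +
      kd i k * hBe j l + kd j l * hBe i k + kd i l * hBe j k + kd j k * hBe i l +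
      hgDe i j k l - hdec' i j k l
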